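/- Let A be a real symmetric positive definite d×d matrix, G an M×d real matrix, and μ, g, b ∈ ℝ^M. Define the M×M matrix Sc = diag(g − b) − diag(μ) · G A⁻¹ Gᵀ. Suppose there is a subset 𝒜 ⊆ {1, …, M} with |𝒜| ≤ d such that: (i) for every m ∉ 𝒜, μ_m = 0 and g_m ≠ b_m; (ii) for every m ∈ 𝒜, μ_m > 0 and g_m = b_m; and (iii) the rows of G indexed by 𝒜 are linearly independent. Then Sc is invertible. -/

import Mathlib

open Matrix

/-- Proposition 2 (Sufficient Conditions of Accurate Differentiation): under the stated
conditions on the activated constraint set `𝒜`, the Schur complement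
`Sc = diag(g − b) − diag(μ) G A⁻¹ Gᵀ` is invertible. -/
theorem schur_complement_invertible {d M : ℕ}
    (A : Matrix (Fin d) (Fin d) ℝ) (hA : A.PosDef)
    (G : Matrix (Fin M) (Fin d) ℝ) (μ g b : Fin M → ℝ)
    (𝒜 : Finset (Fin M)) (hcard : 𝒜.card ≤ d)
    (hout : ∀ m ∉ 𝒜, μ m = 0 ∧ g m ≠ b m)
    (hin : ∀ m ∈ 𝒜, 0 < μ m ∧ g m = b m)
    (hli : LinearIndependent ℝ (fun m : 𝒜 => G m)) :
    IsUnit (Matrix.diagonal (g - b) - Matrix.diagonal μ * (G * A⁻¹ * Gᵀ)) := by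
  rw [Matrix.isUnit_iff_isUnit_det, isUnit_iff_ne_zero]
  intro hdet
  obtain ⟨v, hv, hmul⟩ := (Matrix.exists_mulVec_eq_zero_iff).mpr hdet
  set K : Matrix (Fin M) (Fin M) ℝ := G * A⁻¹ * Gᵀ with hK
  -- rowwise equation
  have hrow : ∀ m, (g m - b m) * v m - μ m * (K.mulVec v) m = 0 := by
    intro m
    have := congrFun hmul m
    simpa [Matrix.sub_mulVec, Matrix.mulVec_diagonal, ← Matrix.mulVec_mulVec,
      Pi.sub_apply, sub_eq_zero] using this
  have hvout : ∀ m ∉ 𝒜, v m = 0 := by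
    intro m hm
    obtain ⟨hμ, hgb⟩ := hout m hm
    have h := hrow m
    rw [hμ, zero_mul, sub_zero, mul_eq_zero] at h
    rcases h with h | h
    · exact absurd (sub_eq_zero.mp h) hgb
    · exact h
  have hKin : ∀ m ∈ 𝒜, (K.mulVec v) m = 0 := by
    intro m hm
    obtain ⟨hμ, hgb⟩ := hin m hm
    have h := hrow m
    rw [hgb, sub_self, zero_mul, zero_sub, neg_eq_zero, mul_eq_zero] at h
    rcases h with h | h
    · exact absurd h hμ.ne'
    · exact h
  -- quadratic form vanishes
  have hquad : v ⬝ᵥ K.mulVec v = 0 := by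
    apply Finset.sum_eq_zero
    intro m _
    by_cases hm : m ∈ 𝒜
    · rw [hKin m hm, mul_zero]
    · rw [hvout m hm, zero_mul]
  have hw : G.vecMul v = 0 := by
    have hAinv : (A⁻¹).PosDef := hA.inv
    by_contra hw
    have hpos := hAinv.dotProduct_mulVec_pos (x := G.vecMul v) hw
    rw [star_trivial] at hpos
    have : v ⬝ᵥ K.mulVec v = (G.vecMul v) ⬝ᵥ (A⁻¹).mulVec (G.vecMul v) := by
      rw [hK]
      rw [show (G * A⁻¹ * Gᵀ).mulVec v = G.mulVec ((A⁻¹).mulVec (Gᵀ.mulVec v)) by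
        rw [Matrix.mulVec_mulVec, Matrix.mulVec_mulVec]]
      rw [Matrix.dotProduct_mulVec, Matrix.mulVec_transpose]
    rw [this] at hquad
    exact absurd hquad hpos.ne'
  -- linear independence on 𝒜 forces v = 0
  have hvin : ∀ m ∈ 𝒜, v m = 0 := by
    have hsum : ∑ i : 𝒜, v i • G (i : Fin M) = 0 := by
      funext j
      have h1 : ∑ m : Fin M, v m * G m j = 0 := congrFun hw j
      have h2 : ∑ m ∈ 𝒜, v m * G m j = ∑ m : Fin M, v m * G m j := by
        apply Finset.sum_subset (Finset.subset_univ _)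
        intro m _ hm
        rw [hvout m hm, zero_mul]
      have h3 : ∑ i : 𝒜, v i * G (i : Fin M) j = ∑ m ∈ 𝒜, v m * G m j :=
        (Finset.sum_attach 𝒜 fun m => v m * G m j)
      simp only [Finset.sum_apply, Pi.smul_apply, smul_eq_mul, Pi.zero_apply]
      rw [h3, h2, h1]
    intro m hm
    exact Fintype.linearIndependent_iff.mp hli (fun i => v i) hsum ⟨m, hm⟩
  apply hv
  funext m
  by_cases hm : m ∈ 𝒜
  · exact hvin m hm
  · exact hvout m hm
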